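/- Let L be a finite meet-semilattice, X = {x₁,…,x_n} ⊆ L, and X̄ = {x₁,…,x_n,x_{n+1},…,x_{n+m}} the smallest factor-closed subset of L containing X. Let R be a commutative ring, k ≥ 2, 𝓕 : (S_n)^{k-2} → R any map; for each x ∈ X fix z_x ∈ X̄ with z_x ≤ x and a function F_x : X̄ → R, and set f_x(z) = ∑_{y ∈ X̄} μ(y,z) F_x(y), with μ the Möbius function of X̄ and ζ(u,v) = 1 if u ≤ v, 0 otherwise. Then Det_𝓕( (F_{x_{i₁}}(z_{x_{i₁}} ∧ x_{i₂} ∧ ⋯ ∧ x_{i_k}))_{1≤i₁,…,i_k≤n} ) = ∑_{1 ≤ k₁ < ⋯ < k_n ≤ n+m} Det_𝓕( (f_{x_{i₁}}(x_{k_{i₂}}) · ζ(x_{k_{i₂}}, z_{x_{i₁}} ∧ x_{i₃} ∧ ⋯ ∧ x_{i_k}))_{1≤i₁,…,i_k≤n} ) · det( ζ(x_{k_i}, x_j) )_{1≤i,j≤n}. -/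

import Mathlib

/-- The `𝓕`-determinant of a `k`-dimensional hypermatrix (`k = m + 2`), where the first two
indices are explicit and the remaining `m = k - 2` indices are gathered in a tuple:
`Det_𝓕(M) = ∑_{(σ₂,σ₃,…,σ_k)} sign(σ₂) ⋅ 𝓕(σ₃,…,σ_k) ⋅ ∏_i M_{i,σ₂(i),…,σ_k(i)}`. -/
def DetF {R : Type*} [CommRing R] {n p : ℕ}
    (𝓕 : (Fin p → Equiv.Perm (Fin n)) → R)
    (M : Fin n → Fin n → (Fin p → Fin n) → R) : R :=
  ∑ σ₂ : Equiv.Perm (Fin n), ∑ τ : Fin p → Equiv.Perm (Fin n),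
    ((Equiv.Perm.sign σ₂ : ℤ) : R) * 𝓕 τ * ∏ i : Fin n, M i (σ₂ i) (fun j => τ j i)

/-- The meet `a ⊓ v 0 ⊓ v 1 ⊓ ⋯` of an element `a` with a tuple `v` of elements of a
meet-semilattice. -/
def meetAll {L : Type*} [SemilatticeInf L] {p : ℕ} (a : L) (v : Fin p → L) : L :=
  (List.ofFn v).foldr (· ⊓ ·) a

section LiAux
open Finset Matrix

lemma detF_eq {R : Type*} [CommRing R] {n p : ℕ}
    (𝓕 : (Fin p → Equiv.Perm (Fin n)) → R)
    (M : Fin n → Fin n → (Fin p → Fin n) → R) :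
    DetF 𝓕 M = ∑ τ : Fin p → Equiv.Perm (Fin n),
      𝓕 τ * (Matrix.of fun i j : Fin n => M j i (fun l => τ l j)).det := by
  rw [DetF, Finset.sum_comm]
  refine Finset.sum_congr rfl fun τ _ => ?_
  rw [Matrix.det_apply', Finset.mul_sum]
  refine Finset.sum_congr rfl fun σ _ => ?_
  simp only [Matrix.of_apply]
  ring

lemma le_meetAll_iff {L : Type*} [SemilatticeInf L] {p : ℕ} {b a : L} {v : Fin p → L} :
    b ≤ meetAll a v ↔ b ≤ a ∧ ∀ l, b ≤ v l := by
  have h : ∀ (lst : List L) (a : L), b ≤ lst.foldr (· ⊓ ·) a ↔ b ≤ a ∧ ∀ c ∈ lst, b ≤ c := by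
    intro lst
    induction lst with
    | nil => simp
    | cons c t ih => intro a; simp only [List.foldr_cons, le_inf_iff, ih, List.mem_cons]; aesop
  rw [meetAll, h]
  simp only [List.mem_ofFn, Set.mem_range]
  constructor
  · rintro ⟨h1, h2⟩; exact ⟨h1, fun l => h2 _ ⟨l, rfl⟩⟩
  · rintro ⟨h1, h2⟩; exact ⟨h1, by rintro c ⟨l, rfl⟩; exact h2 l⟩

lemma meetAll_le {L : Type*} [SemilatticeInf L] {p : ℕ} (a : L) (v : Fin p → L) :
    meetAll a v ≤ a := by
  have h : ∀ lst : List L, lst.foldr (· ⊓ ·) a ≤ a := by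
    intro lst
    induction lst with
    | nil => simp
    | cons c t ih => exact le_trans inf_le_right ih
  exact h _

lemma F_inversion {L R : Type*} [Fintype L] [DecidableEq L] [PartialOrder L]
    [LocallyFiniteOrder L] [DecidableRel ((· ≤ ·) : L → L → Prop)] [CommRing R]
    {nm : ℕ} (x : Fin nm → L) (hinj : Function.Injective x)
    (hfc : ∀ (j : Fin nm) (w : L), w ≤ x j → ∃ j' : Fin nm, x j' = w)
    (F : L → R) (f : L → R)
    (hf : ∀ v, f v = ∑ j, IncidenceAlgebra.mu R (x j) v * F (x j))
    (v : L) (j₀ : Fin nm) (hv : v ≤ x j₀) :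
    F v = ∑ j, f (x j) * (if x j ≤ v then 1 else 0) := by
  classical
  obtain ⟨jv, hjv⟩ := hfc j₀ v hv
  have key : ∀ j' : Fin nm,
      ∑ j, (if x j ≤ v then (1 : R) else 0) * IncidenceAlgebra.mu R (x j') (x j)
        = if x j' = v then 1 else 0 := by
    intro j'
    have hstep : ∑ j, (if x j ≤ v then (1 : R) else 0) * IncidenceAlgebra.mu R (x j') (x j)
        = ∑ j ∈ Finset.univ.filter (fun j => x j' ≤ x j ∧ x j ≤ v),
            IncidenceAlgebra.mu R (x j') (x j) := by
      rw [Finset.sum_filter]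
      refine Finset.sum_congr rfl fun j _ => ?_
      by_cases h1 : x j ≤ v
      · by_cases h2 : x j' ≤ x j
        · simp [h1, h2]
        · simp [h1, h2, IncidenceAlgebra.apply_eq_zero_of_not_le h2]
      · simp [h1]
    rw [hstep, ← IncidenceAlgebra.sum_Icc_mu_right (𝕜 := R) (x j') v]
    apply Finset.sum_bij (fun j _ => x j)
    · intro j hj
      simp only [Finset.mem_filter, Finset.mem_univ, true_and] at hj
      exact Finset.mem_Icc.mpr hj
    · intro j₁ h₁ j₂ h₂ h
      exact hinj h
    · intro y hy
      rw [Finset.mem_Icc] at hy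
      obtain ⟨j, hj⟩ := hfc j₀ y (hy.2.trans hv)
      exact ⟨j, by simp [hj, hy.1, hy.2], hj⟩
    · intros; rfl
  calc F v = ∑ j' : Fin nm, (if x j' = v then (1 : R) else 0) * F (x j') := by
        rw [Finset.sum_eq_single jv]
        · simp [hjv]
        · intro j' _ hne
          have : ¬ x j' = v := fun h => hne (hinj (h.trans hjv.symm))
          simp [this]
        · intro h; exact absurd (Finset.mem_univ jv) h
    _ = ∑ j' : Fin nm,
          (∑ j, (if x j ≤ v then (1 : R) else 0) * IncidenceAlgebra.mu R (x j') (x j)) *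
            F (x j') := by
        refine Finset.sum_congr rfl fun j' _ => by rw [key j']
    _ = ∑ j, f (x j) * (if x j ≤ v then 1 else 0) := by
        simp_rw [Finset.sum_mul]
        rw [Finset.sum_comm]
        refine Finset.sum_congr rfl fun j _ => ?_
        rw [hf (x j), Finset.sum_mul]
        exact Finset.sum_congr rfl fun j' _ => by ring

lemma exists_unique_mono_perm {n N : ℕ} (r : Fin n → Fin N) (hr : Function.Injective r) :
    ∃! q : (Fin n → Fin N) × Equiv.Perm (Fin n),
      (∀ i j : Fin n, i < j → q.1 i < q.1 j) ∧ q.1 ∘ q.2 = r := by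
  classical
  set s : Finset (Fin N) := Finset.image r Finset.univ with hs
  have hcard : s.card = n := by
    rw [hs, Finset.card_image_of_injective _ hr, Finset.card_univ, Fintype.card_fin]
  have hmem : ∀ i, r i ∈ s := fun i => Finset.mem_image_of_mem r (Finset.mem_univ i)
  set κ : Fin n → Fin N := fun i => s.orderEmbOfFin hcard i with hκ
  have hκmono : StrictMono κ := (s.orderEmbOfFin hcard).strictMono
  set π0 : Fin n → Fin n := fun i => (s.orderIsoOfFin hcard).symm ⟨r i, hmem i⟩ with hπ0
  have hcomp : ∀ i, κ (π0 i) = r i := by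
    intro i
    calc κ (π0 i) = ((s.orderIsoOfFin hcard) (π0 i) : Fin N) :=
          (Finset.coe_orderIsoOfFin_apply s hcard _).symm
      _ = r i := by rw [hπ0]; simp
  have hπ0inj : Function.Injective π0 := by
    intro a b hab
    apply hr
    rw [← hcomp a, ← hcomp b, hab]
  have hπ0bij := Finite.injective_iff_bijective.mp hπ0inj
  refine ⟨⟨κ, Equiv.ofBijective π0 hπ0bij⟩, ⟨fun i j h => hκmono h, funext fun i => hcomp i⟩, ?_⟩
  rintro ⟨κ', π'⟩ ⟨hmono', hcomp'⟩
  have hκ'mono : StrictMono κ' := fun a b h => hmono' a b h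
  have hκ'mem : ∀ i, κ' i ∈ s := by
    intro i
    have : κ' i = r (π'.symm i) := by
      have := congrFun hcomp' (π'.symm i)
      simpa using this
    rw [this]; exact hmem _
  have hκeq : κ' = κ := by
    have := Finset.orderEmbOfFin_unique hcard hκ'mem hκ'mono
    exact this
  have hπeq : π' = Equiv.ofBijective π0 hπ0bij := by
    apply Equiv.ext; intro i
    show π' i = π0 i
    apply hκmono.injective
    have h1 : κ (π' i) = r i := by rw [← hκeq]; exact congrFun hcomp' i
    have h2 : κ (π0 i) = r i := hcomp i
    simpa [Equiv.ofBijective] using h1.trans h2.symm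
  rw [Prod.ext_iff]
  exact ⟨hκeq, hπeq⟩

lemma sum_inj_eq_sum_mono_perm {M : Type*} [AddCommMonoid M] {n N : ℕ}
    (G : (Fin n → Fin N) → M) :
    ∑ r ∈ Finset.univ.filter (fun r : Fin n → Fin N => Function.Injective r), G r =
      ∑ κ ∈ Finset.univ.filter
          (fun κ : Fin n → Fin N => ∀ i j : Fin n, i < j → κ i < κ j),
        ∑ π : Equiv.Perm (Fin n), G (κ ∘ π) := by
  classical
  rw [← Finset.sum_product']
  symm
  apply Finset.sum_bij (fun q _ => q.1 ∘ q.2)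
  · rintro ⟨κ, π⟩ hq
    simp only [Finset.mem_product, Finset.mem_filter, Finset.mem_univ, true_and] at hq ⊢
    have : StrictMono κ := fun a b h => hq.1 a b h
    exact this.injective.comp π.injective
  · rintro ⟨κ₁, π₁⟩ h₁ ⟨κ₂, π₂⟩ h₂ heq
    simp only [Finset.mem_product, Finset.mem_filter, Finset.mem_univ, true_and] at h₁ h₂
    have hinj : Function.Injective (κ₁ ∘ π₁) := by
      have : StrictMono κ₁ := fun a b h => h₁.1 a b h
      exact this.injective.comp π₁.injective
    obtain ⟨q, -, huniq⟩ := exists_unique_mono_perm (κ₁ ∘ ⇑π₁) hinj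
    have e₁ := huniq ⟨κ₁, π₁⟩ ⟨h₁.1, rfl⟩
    have e₂ := huniq ⟨κ₂, π₂⟩ ⟨h₂.1, heq.symm⟩
    rw [e₁, e₂]
  · intro r hr
    simp only [Finset.mem_filter, Finset.mem_univ, true_and] at hr
    obtain ⟨⟨κ, π⟩, ⟨hmono, hcomp⟩, -⟩ := exists_unique_mono_perm r hr
    exact ⟨⟨κ, π⟩, by simpa using hmono, hcomp⟩
  · intros; rfl

lemma cauchyBinet {R : Type*} [CommRing R] {n N : ℕ}
    (A : Matrix (Fin n) (Fin N) R) (B : Matrix (Fin N) (Fin n) R) :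
    (A * B).det = ∑ κ ∈ Finset.univ.filter
        (fun κ : Fin n → Fin N => ∀ i j : Fin n, i < j → κ i < κ j),
      (A.submatrix id κ).det * (B.submatrix κ id).det := by
  classical
  have h2 : (A * B).det
      = ∑ r : Fin n → Fin N,
          (∏ i, A i (r i)) • Matrix.detRowAlternating (R := R) (Matrix.of fun i => B (r i)) := by
    have h1 : (A * B).det
        = (Matrix.detRowAlternating (R := R) (n := Fin n)).toMultilinearMap
            (fun i => ∑ j : Fin N, A i j • B j) := by
      congr 1
      ext i k
      simp [Matrix.mul_apply, Finset.sum_apply]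
    rw [h1, (Matrix.detRowAlternating (R := R) (n := Fin n)).toMultilinearMap.map_sum
      (fun i (j : Fin N) => A i j • B j)]
    refine Finset.sum_congr rfl fun r _ => ?_
    exact (Matrix.detRowAlternating (R := R) (n := Fin n)).toMultilinearMap.map_smul_univ
      (fun i => A i (r i)) (fun i => B (r i))
  rw [h2]
  rw [← Finset.sum_filter_add_sum_filter_not Finset.univ (fun r : Fin n → Fin N =>
    Function.Injective r)]
  have h3 : ∑ r ∈ Finset.univ.filter
      (fun r : Fin n → Fin N => ¬ Function.Injective r),
      (∏ i, A i (r i)) • Matrix.detRowAlternating (R := R) (Matrix.of fun i => B (r i)) = 0 := by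
    refine Finset.sum_eq_zero fun r hr => ?_
    simp only [Finset.mem_filter, Finset.mem_univ, true_and] at hr
    obtain ⟨a, b, hab, hne⟩ := Function.not_injective_iff.mp hr
    rw [Matrix.detRowAlternating.map_eq_zero_of_eq (Matrix.of fun i => B (r i)) (congrArg B hab) hne,
      smul_zero]
  rw [h3, add_zero]
  rw [sum_inj_eq_sum_mono_perm]
  refine Finset.sum_congr rfl fun κ hκ => ?_
  calc ∑ π : Equiv.Perm (Fin n),
        (∏ i, A i ((κ ∘ π) i)) • Matrix.detRowAlternating (R := R)
          (Matrix.of fun i => B ((κ ∘ π) i))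
      = ∑ π : Equiv.Perm (Fin n),
          (((Equiv.Perm.sign π : ℤ) : R) * ∏ i, A i (κ (π i))) * (B.submatrix κ id).det := by
        refine Finset.sum_congr rfl fun π _ => ?_
        have hd : Matrix.detRowAlternating (R := R) (Matrix.of fun i => B ((κ ∘ π) i))
            = ((B.submatrix κ id).submatrix π id).det := rfl
        rw [hd, Matrix.det_permute]
        simp only [Function.comp_apply, smul_eq_mul]
        ring
    _ = (∑ π : Equiv.Perm (Fin n), ((Equiv.Perm.sign π : ℤ) : R) * ∏ i, A i (κ (π i)))
          * (B.submatrix κ id).det := by rw [← Finset.sum_mul]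
    _ = (A.submatrix id κ).det * (B.submatrix κ id).det := by
        congr 1
        rw [Matrix.det_apply']
        refine Fintype.sum_bijective _ inv_involutive.bijective _ _ fun π => ?_
        rw [Equiv.Perm.sign_inv]
        congr 1
        exact Fintype.prod_equiv π _ _ fun i => by simp [Matrix.submatrix_apply]


end LiAux

section LiMain
open Finset Matrix

/-- let `L` be a finite meet-semilattice, `X = {x₁,…,x_n}` and
`X̄ = {x₁,…,x_{n+m}}` the smallest factor-closed subset of `L` containing `X`, `k = p + 2 ≥ 2`,
`𝓕 : (S_n)^{k-2} → R`; for each `1 ≤ i ≤ n` fix `z i ∈ X̄` with `z i ≤ xᵢ` and a function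
`F i` on `X̄`, and set `f i v = ∑_{y ∈ X̄} μ(y,v) F i y`, `ζ(u,v) = 1` if `u ≤ v`, else `0`.
Then `Det_𝓕((F_{x_{i₁}}(z_{x_{i₁}} ∧ x_{i₂} ∧ ⋯ ∧ x_{i_k}))) = ∑_{k₁<⋯<k_n}
Det_𝓕((f_{x_{i₁}}(x_{k_{i₂}}) ζ(x_{k_{i₂}}, z_{x_{i₁}} ∧ x_{i₃} ∧ ⋯ ∧ x_{i_k}))) ⋅
det(ζ(x_{k_i},x_j))`. -/

theorem li_expansion_detF {L R : Type*} [Fintype L] [DecidableEq L] [SemilatticeInf L]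
    [LocallyFiniteOrder L] [DecidableRel ((· ≤ ·) : L → L → Prop)] [CommRing R]
    {n m p : ℕ} (x : Fin (n + m) → L) (hinj : Function.Injective x)
    (hfc : ∀ (j : Fin (n + m)) (w : L), w ≤ x j → ∃ j' : Fin (n + m), x j' = w)
    (hmin : ∀ j : Fin (n + m), ∃ i : Fin n, x j ≤ x (Fin.castAdd m i))
    (z : Fin n → L) (hzmem : ∀ i, ∃ j : Fin (n + m), z i = x j)
    (hz : ∀ i : Fin n, z i ≤ x (Fin.castAdd m i))
    (𝓕 : (Fin p → Equiv.Perm (Fin n)) → R)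
    (F : Fin n → L → R)
    (f : Fin n → L → R)
    (hf : ∀ i v, f i v = ∑ j : Fin (n + m), IncidenceAlgebra.mu R (x j) v * F i (x j)) :
    DetF 𝓕 (fun i₁ i₂ t =>
        F i₁ (meetAll (z i₁ ⊓ x (Fin.castAdd m i₂)) (fun l => x (Fin.castAdd m (t l))))) =
      ∑ κ ∈ Finset.univ.filter
          (fun κ : Fin n → Fin (n + m) => ∀ i j : Fin n, i < j → κ i < κ j),
        DetF 𝓕 (fun i₁ i₂ t =>
            f i₁ (x (κ i₂)) *
              (if x (κ i₂) ≤ meetAll (z i₁) (fun l => x (Fin.castAdd m (t l))) then (1 : R)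
                else 0)) *
          Matrix.det (Matrix.of fun i j : Fin n =>
            if x (κ i) ≤ x (Fin.castAdd m j) then (1 : R) else 0) := by
  classical
  -- the rectangular "A" hypermatrix and the zeta matrix "B"
  let A : Fin n → Fin (n + m) → (Fin p → Fin n) → R := fun i j t =>
    f i (x j) * (if x j ≤ meetAll (z i) (fun l => x (Fin.castAdd m (t l))) then (1 : R) else 0)
  let B : Matrix (Fin (n + m)) (Fin n) R :=
    Matrix.of fun j i₂ => if x j ≤ x (Fin.castAdd m i₂) then (1 : R) else 0
  let Aτ : (Fin p → Equiv.Perm (Fin n)) → Matrix (Fin n) (Fin (n + m)) R := fun τ =>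
    Matrix.of fun i k => A i k (fun l => τ l i)
  have entry : ∀ (i₁ i₂ : Fin n) (t : Fin p → Fin n),
      F i₁ (meetAll (z i₁ ⊓ x (Fin.castAdd m i₂)) (fun l => x (Fin.castAdd m (t l))))
        = ∑ j : Fin (n + m), A i₁ j t * B j i₂ := by
    intro i₁ i₂ t
    have hvle : meetAll (z i₁ ⊓ x (Fin.castAdd m i₂)) (fun l => x (Fin.castAdd m (t l)))
        ≤ x (Fin.castAdd m i₂) := (meetAll_le _ _).trans inf_le_right
    rw [F_inversion x hinj hfc (F i₁) (f i₁) (hf i₁) _ _ hvle]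
    refine Finset.sum_congr rfl fun j _ => ?_
    have hiff : x j ≤ meetAll (z i₁ ⊓ x (Fin.castAdd m i₂)) (fun l => x (Fin.castAdd m (t l)))
        ↔ (x j ≤ meetAll (z i₁) (fun l => x (Fin.castAdd m (t l)))
            ∧ x j ≤ x (Fin.castAdd m i₂)) := by
      rw [le_meetAll_iff, le_meetAll_iff, le_inf_iff]
      tauto
    show f i₁ (x j) * _ = (f i₁ (x j) * _) * _
    by_cases h1 : x j ≤ meetAll (z i₁) (fun l => x (Fin.castAdd m (t l))) <;>
      by_cases h2 : x j ≤ x (Fin.castAdd m i₂) <;>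
        simp [hiff, h1, h2, B, Matrix.of_apply]
  have S := Finset.univ.filter
      (fun κ : Fin n → Fin (n + m) => ∀ i j : Fin n, i < j → κ i < κ j)
  rw [detF_eq]
  have hmat : ∀ τ : Fin p → Equiv.Perm (Fin n),
      (Matrix.of fun i j : Fin n =>
          F j (meetAll (z j ⊓ x (Fin.castAdd m i)) (fun l => x (Fin.castAdd m (τ l j)))))
        = (Aτ τ * B)ᵀ := by
    intro τ
    ext i j
    rw [Matrix.transpose_apply, Matrix.mul_apply, Matrix.of_apply]
    exact entry j i (fun l => τ l j)
  calc ∑ τ : Fin p → Equiv.Perm (Fin n), 𝓕 τ *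
        (Matrix.of fun i j : Fin n =>
          F j (meetAll (z j ⊓ x (Fin.castAdd m i)) (fun l => x (Fin.castAdd m (τ l j))))).det
      = ∑ τ : Fin p → Equiv.Perm (Fin n), ∑ κ ∈ Finset.univ.filter
            (fun κ : Fin n → Fin (n + m) => ∀ i j : Fin n, i < j → κ i < κ j),
          𝓕 τ * (((Aτ τ).submatrix id κ).det * (B.submatrix κ id).det) := by
        refine Finset.sum_congr rfl fun τ _ => ?_
        rw [hmat τ, Matrix.det_transpose, cauchyBinet, Finset.mul_sum]
    _ = ∑ κ ∈ Finset.univ.filter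
            (fun κ : Fin n → Fin (n + m) => ∀ i j : Fin n, i < j → κ i < κ j),
          (∑ τ : Fin p → Equiv.Perm (Fin n), 𝓕 τ * ((Aτ τ).submatrix id κ).det) *
            (B.submatrix κ id).det := by
        rw [Finset.sum_comm]
        refine Finset.sum_congr rfl fun κ _ => ?_
        rw [Finset.sum_mul]
        exact Finset.sum_congr rfl fun τ _ => by ring
    _ = _ := by
        refine Finset.sum_congr rfl fun κ _ => ?_
        congr 1
        rw [detF_eq]
        refine Finset.sum_congr rfl fun τ _ => ?_
        congr 1
        rw [← Matrix.det_transpose ((Aτ τ).submatrix id κ)]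
        congr 1

end LiMain
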